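/- Let n ≥ 1, let B be a nondegenerate symmetric ℚ-bilinear form on ℚⁿ, let ℓ ≥ 1 be an integer, and write e(x) := exp(2πi·x) for x ∈ ℚ. Let Λ_R ⊆ Λ₁ and Λ_R ⊆ Λ₂ be lattices in ℚⁿ such that Λ' := Λ_R ∩ ℓ·Λ₁^B = Λ_R ∩ ℓ·Λ₂^B, let g: Λ₁ × Λ₂ → ℂˣ be biadditive and invariant under translation by Λ_R in each argument, and let A: Λ₂ → Λ₂ be a centralizer transfer map, i.e., A(Λ₂) = Λ₂ ∩ ℓ·Λ_R^B and A(Λ R) = Λ_R ∩ ℓ·Λ₂^B. Define Cent^g := {λ ∈ Λ₁ : e(B(λ,μ)/ℓ) = g(λ,μ) for all μ ∈ Λ₂} and let a_g^ℓ: (Λ₁/Λ_R) × (Λ₂/Λ_R) → ℂˣ be the well-defined map induced by (λ,μ) ↦ e(−B(λ,A(μ))/ℓ)·g(λ,A(μ)). Then the composite map Cent^g ↪ Λ₁ → Λ₁/Λ_R has kernel exactly Λ' and image exactly the left radical {λ̄ ∈ Λ₁/Λ_R : a_g^ℓ(λ̄,μ̄) = 1 for all μ̄ ∈ Λ₂/Λ_R};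 in particular it induces a group isomorphism Cent^g/Λ' ≅ Rad(a_g^ℓ). -/

import Mathlib

/-- A lattice in `ℚⁿ`: a subgroup generated by a `ℚ`-basis. -/
def IsLattice {n : ℕ} (L : AddSubgroup (Fin n → ℚ)) : Prop :=
  ∃ b : Module.Basis (Fin n) ℚ (Fin n → ℚ), L = AddSubgroup.closure (Set.range b)

/-- The dual lattice `L^B` of `L` with respect to a bilinear form `B`. -/
def dualLattice {n : ℕ} (B : (Fin n → ℚ) →ₗ[ℚ] (Fin n → ℚ) →ₗ[ℚ] ℚ)
    (L : AddSubgroup (Fin n → ℚ)) : AddSubgroup (Fin n → ℚ) where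
  carrier := {x | ∀ y ∈ L, ∃ k : ℤ, B x y = (k : ℚ)}
  zero_mem' := fun y _ => ⟨0, by simp⟩
  add_mem' := by
    intro a b ha hb y hy
    obtain ⟨k, hk⟩ := ha y hy
    obtain ⟨m, hm⟩ := hb y hy
    exact ⟨k + m, by simp [map_add, hk, hm]⟩
  neg_mem' := by
    intro a ha y hy
    obtain ⟨k, hk⟩ := ha y hy
    exact ⟨-k, by simp [hk]⟩

/-- The lattice `ℓ·L`. -/
def smulLat {n : ℕ} (ℓ : ℕ) (L : AddSubgroup (Fin n → ℚ)) : AddSubgroup (Fin n → ℚ) :=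
  L.map (DistribMulAction.toAddMonoidHom (Fin n → ℚ) ((ℓ : ℚ)))

/-- `e(x) = exp(2πi·x)`. -/
noncomputable def ee (x : ℚ) : ℂ := Complex.exp (2 * Real.pi * Complex.I * (x : ℂ))

lemma ee_add (x y : ℚ) : ee (x + y) = ee x * ee y := by
  simp [ee, mul_add, Complex.exp_add]

lemma ee_ne_zero (x : ℚ) : ee x ≠ 0 := Complex.exp_ne_zero _

lemma ee_neg (x : ℚ) : ee (-x) = (ee x)⁻¹ := by
  simp [ee, ← Complex.exp_neg, mul_neg]

lemma ee_eq_one_iff {x : ℚ} : ee x = 1 ↔ ∃ k : ℤ, x = k := by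
  rw [ee, Complex.exp_eq_one_iff]
  constructor
  · rintro ⟨k, hk⟩
    refine ⟨k, ?_⟩
    have h2 : (2 * Real.pi * Complex.I : ℂ) ≠ 0 := by
      refine mul_ne_zero (mul_ne_zero two_ne_zero ?_) Complex.I_ne_zero
      exact_mod_cast Real.pi_ne_zero
    have hx : (x : ℂ) = (k : ℂ) := by
      rw [mul_comm ((k : ℂ)) _] at hk
      exact mul_left_cancel₀ h2 hk
    exact_mod_cast hx
  · rintro ⟨k, rfl⟩
    exact ⟨k, by push_cast; ring⟩

lemma ee_int (k : ℤ) : ee k = 1 := ee_eq_one_iff.mpr ⟨k, rfl⟩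


section Lemmas
variable {n : ℕ} {B : (Fin n → ℚ) →ₗ[ℚ] (Fin n → ℚ) →ₗ[ℚ] ℚ} {ℓ : ℕ}

lemma mem_dualLattice {L : AddSubgroup (Fin n → ℚ)} {x} :
    x ∈ dualLattice B L ↔ ∀ y ∈ L, ∃ k : ℤ, B x y = (k : ℚ) := Iff.rfl

lemma mem_smul_dual (hℓ : 1 ≤ ℓ) {L : AddSubgroup (Fin n → ℚ)} {x} :
    x ∈ smulLat ℓ (dualLattice B L) ↔ ∀ y ∈ L, ∃ k : ℤ, B x y = (ℓ : ℚ) * k := by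
  have hℓ0 : (ℓ : ℚ) ≠ 0 := by positivity
  constructor
  · rintro hx y hy
    obtain ⟨w, hw, hwx⟩ := hx
    obtain ⟨k, hk⟩ := hw y hy
    refine ⟨k, ?_⟩
    have : x = (ℓ : ℚ) • w := hwx.symm
    subst this
    simp [map_smul, smul_eq_mul, hk]
  · intro h
    refine ⟨(ℓ : ℚ)⁻¹ • x, fun y hy => ?_, by simp [smul_smul, hℓ0]⟩
    obtain ⟨k, hk⟩ := h y hy
    exact ⟨k, by simp [map_smul, smul_eq_mul, hk]; field_simp [hk]⟩

/-- subgroup of points where a linear functional is integral -/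
def intLevel (f : (Fin n → ℚ) →ₗ[ℚ] ℚ) : AddSubgroup (Fin n → ℚ) :=
  AddSubgroup.comap f.toAddMonoidHom (AddMonoidHom.range (Int.castAddHom ℚ))

lemma mem_intLevel {f : (Fin n → ℚ) →ₗ[ℚ] ℚ} {y} :
    y ∈ intLevel f ↔ ∃ k : ℤ, f y = (k : ℚ) := by
  simp only [intLevel, AddSubgroup.mem_comap, AddMonoidHom.mem_range, Int.coe_castAddHom,
    LinearMap.toAddMonoidHom_coe, eq_comm]

lemma den_mul_int (q : ℚ) {D : ℕ} (hD : q.den ∣ D) : ∃ k : ℤ, (D : ℚ) * q = (k : ℚ) := by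
  obtain ⟨m, hm⟩ := hD
  refine ⟨q.num * m, ?_⟩
  have h1 : (q.den : ℚ) * q = q.num := by
    rw [mul_comm, Rat.mul_den_eq_num]
  push_cast [hm]
  rw [mul_comm (q.den : ℚ) (m : ℚ), mul_assoc, h1]
  ring

lemma denom_bound (hBsymm : ∀ x y, B x y = B y x)
    {L L' : AddSubgroup (Fin n → ℚ)} (hL : IsLattice L) (hL' : IsLattice L') :
    ∃ D : ℕ, 1 ≤ D ∧ ∀ x ∈ L, ∀ y ∈ L', ∃ k : ℤ, (D : ℚ) * B x y = (k : ℚ) := by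
  obtain ⟨b, rfl⟩ := hL
  obtain ⟨b', rfl⟩ := hL'
  classical
  set D : ℕ := ∏ i : Fin n, ∏ j : Fin n, (B (b i) (b' j)).den with hD
  have hD1 : 1 ≤ D := Nat.one_le_iff_ne_zero.mpr (by
    simp [hD, Finset.prod_eq_zero_iff, Rat.den_ne_zero])
  have hdvd : ∀ i j, (B (b i) (b' j)).den ∣ D := by
    intro i j
    calc (B (b i) (b' j)).den ∣ ∏ j : Fin n, (B (b i) (b' j)).den :=
          Finset.dvd_prod_of_mem _ (Finset.mem_univ j)
      _ ∣ D := Finset.dvd_prod_of_mem _ (Finset.mem_univ i)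
  refine ⟨D, hD1, ?_⟩
  -- inner step
  have inner : ∀ x, (∀ j, ∃ k : ℤ, (D : ℚ) * B x (b' j) = (k : ℚ)) →
      ∀ y ∈ AddSubgroup.closure (Set.range b'), ∃ k : ℤ, (D : ℚ) * B x y = (k : ℚ) := by
    intro x hx y hy
    have : AddSubgroup.closure (Set.range b') ≤ intLevel ((D : ℚ) • (B x)) := by
      rw [AddSubgroup.closure_le]
      rintro _ ⟨j, rfl⟩
      exact mem_intLevel.mpr (by simpa using hx j)
    simpa using mem_intLevel.mp (this hy)
  have outer : AddSubgroup.closure (Set.range b) ≤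
      ⨅ (y : Fin n → ℚ) (_ : y ∈ AddSubgroup.closure (Set.range b')),
        intLevel ((D : ℚ) • (B.flip y)) := by
    rw [AddSubgroup.closure_le]
    rintro _ ⟨i, rfl⟩
    simp only [SetLike.mem_coe, AddSubgroup.mem_iInf]
    intro y hy
    have := inner (b i) (fun j => den_mul_int _ (hdvd i j)) y hy
    rw [mem_intLevel]
    simpa using this
  intro x hx y hy
  have := AddSubgroup.mem_iInf.mp (outer hx)
  have h2 := (AddSubgroup.mem_iInf.mp (this y)) hy
  rw [mem_intLevel] at h2
  simpa using h2

end Lemmas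


section Fin
variable {n : ℕ}

lemma finite_quot {L P : AddSubgroup (Fin n → ℚ)}
    (hL : ∃ b : Module.Basis (Fin n) ℚ (Fin n → ℚ), L = AddSubgroup.closure (Set.range b))
    {N : ℕ} (hN : 1 ≤ N) (hNP : ∀ x ∈ L, (N : ℚ) • x ∈ P) :
    Finite (L ⧸ P.addSubgroupOf L) := by
  haveI : AddGroup.FG L := by
    obtain ⟨b, rfl⟩ := hL
    haveI : Finite (Set.range (b : Fin n → (Fin n → ℚ))) := Set.finite_range _
    exact AddGroup.closure_finite_fg _
  refine AddCommGroup.finite_of_fg_torsion _ (fun g => ?_)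
  induction g using QuotientAddGroup.induction_on with
  | H z =>
    rw [isOfFinAddOrder_iff_nsmul_eq_zero]
    refine ⟨N, hN, ?_⟩
    rw [← QuotientAddGroup.mk_nsmul, QuotientAddGroup.eq_zero_iff,
      AddSubgroup.mem_addSubgroupOf]
    have : ((N • z : L) : Fin n → ℚ) = (N : ℚ) • (z : Fin n → ℚ) := by
      push_cast
      rw [Nat.cast_smul_eq_nsmul]
    rw [this]
    exact hNP _ z.2
end Fin

lemma duality {G H : Type*} [AddCommGroup G] [AddCommGroup H] [Finite G] [Finite H]
    (p : G → H → ℂ)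
    (hp1 : ∀ g g' h, p (g + g') h = p g h * p g' h)
    (hp2 : ∀ g h h', p g (h + h') = p g h * p g h')
    (h0 : ∀ h, p 0 h = 1) (h0' : ∀ g, p g 0 = 1)
    (hl : ∀ g, (∀ h, p g h = 1) → g = 0)
    (hr : ∀ h, (∀ g, p g h = 1) → h = 0)
    (χ : AddChar H ℂ) : ∃ g : G, ∀ h, p g h = χ h := by
  classical
  cases nonempty_fintype G
  cases nonempty_fintype H
  have hne : ∀ g h, p g h ≠ 0 := by
    intro g h hz
    have := hp2 g h (-h)
    rw [add_neg_cancel, h0' g, hz, zero_mul] at this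
    exact one_ne_zero this
  let Φ : G → AddChar H ℂ := fun g => ⟨fun h => p g h, h0' g, fun a b => hp2 g a b⟩
  have hΦapp : ∀ g h, Φ g h = p g h := fun _ _ => rfl
  have hΦ : Function.Injective Φ := by
    intro g g' hgg'
    have hdiff : ∀ h, p (g - g') h = 1 := by
      intro h
      have h1 : p g h = p g' h := by
        have := DFunLike.congr_fun hgg' h; rwa [hΦapp, hΦapp] at this
      have h2 : p (g' + (g - g')) h = p g' h * p (g - g') h := hp1 g' (g - g') h
      rw [add_sub_cancel, h1] at h2
      field_simp [hne g' h] at h2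
      rw [← h2]
    exact sub_eq_zero.mp (hl (g - g') hdiff)
  let Ψ : H → AddChar G ℂ := fun h => ⟨fun g => p g h, h0 h, fun a b => hp1 a b h⟩
  have hΨapp : ∀ g h, Ψ h g = p g h := fun _ _ => rfl
  have hΨ : Function.Injective Ψ := by
    intro h h' hhh'
    have hdiff : ∀ g, p g (h - h') = 1 := by
      intro g
      have h1 : p g h = p g h' := by
        have := DFunLike.congr_fun hhh' g; rwa [hΨapp, hΨapp] at this
      have h2 : p g (h' + (h - h')) = p g h' * p g (h - h') := hp2 g h' (h - h')
      rw [add_sub_cancel, h1] at h2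
      field_simp [hne g h'] at h2
      rw [← h2]
    exact sub_eq_zero.mp (hr (h - h') hdiff)
  have c1 : Fintype.card G ≤ Fintype.card H := by
    have := Fintype.card_le_of_injective Φ hΦ
    rwa [AddChar.card_eq] at this
  have c2 : Fintype.card H ≤ Fintype.card G := by
    have := Fintype.card_le_of_injective Ψ hΨ
    rwa [AddChar.card_eq] at this
  have hsurj : Function.Surjective Φ := by
    have : Function.Bijective Φ := (Fintype.bijective_iff_injective_and_card Φ).mpr
      ⟨hΦ, by rw [AddChar.card_eq]; omega⟩
    exact this.2
  obtain ⟨g, hg⟩ := hsurj χ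
  exact ⟨g, fun h => by rw [← hg, hΦapp]⟩


section Main
variable {n : ℕ} {B : (Fin n → ℚ) →ₗ[ℚ] (Fin n → ℚ) →ₗ[ℚ] ℚ} {ℓ : ℕ}

lemma exists_alpha (hBsymm : ∀ x y, B x y = B y x) (hℓ : 1 ≤ ℓ)
    {ΛR Λ₂ : AddSubgroup (Fin n → ℚ)}
    (hΛR : IsLattice ΛR) (hΛ₂ : IsLattice Λ₂)
    (χ : (Fin n → ℚ) → ℂ)
    (hχadd : ∀ μ ∈ Λ₂, ∀ μ' ∈ Λ₂, χ (μ + μ') = χ μ * χ μ')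
    (hχM : ∀ μ ∈ Λ₂ ⊓ smulLat ℓ (dualLattice B ΛR), χ μ = 1) :
    ∃ α ∈ ΛR, ∀ μ ∈ Λ₂, ee (B α μ / ℓ) = χ μ := by
  classical
  have hℓ0 : (ℓ : ℚ) ≠ 0 := by positivity
  set K : AddSubgroup (Fin n → ℚ) := ΛR ⊓ smulLat ℓ (dualLattice B Λ₂) with hK
  set M : AddSubgroup (Fin n → ℚ) := Λ₂ ⊓ smulLat ℓ (dualLattice B ΛR) with hM
  -- finiteness of the two quotients
  obtain ⟨D, hD1, hD⟩ := denom_bound (B := B) hBsymm hΛR hΛ₂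
  set N : ℕ := ℓ * D with hN
  have hN1 : 1 ≤ N := Nat.one_le_iff_ne_zero.mpr (by positivity)
  have hsm : ∀ (x : Fin n → ℚ) (c : ℚ) (y), B (c • x) y = c * B x y := by
    intro x c y; rw [map_smul, LinearMap.smul_apply, smul_eq_mul]
  have hNK : ∀ x ∈ ΛR, (N : ℚ) • x ∈ K := by
    intro x hx
    refine AddSubgroup.mem_inf.mpr ⟨?_, (mem_smul_dual hℓ).mpr fun y hy => ?_⟩
    · rw [Nat.cast_smul_eq_nsmul ℚ N x]
      exact AddSubgroup.nsmul_mem _ hx N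
    obtain ⟨k, hk⟩ := hD x hx y hy
    refine ⟨k, ?_⟩
    rw [hsm, hN]
    push_cast
    rw [mul_assoc, hk]
  have hNM : ∀ y ∈ Λ₂, (N : ℚ) • y ∈ M := by
    intro y hy
    refine AddSubgroup.mem_inf.mpr ⟨?_, (mem_smul_dual hℓ).mpr fun x hx => ?_⟩
    · rw [Nat.cast_smul_eq_nsmul ℚ N y]
      exact AddSubgroup.nsmul_mem _ hy N
    obtain ⟨k, hk⟩ := hD x hx y hy
    refine ⟨k, ?_⟩
    rw [hsm, hBsymm, hN]
    push_cast
    rw [mul_assoc, hk]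
  haveI hFinG : Finite (ΛR ⧸ K.addSubgroupOf ΛR) := finite_quot hΛR hN1 hNK
  haveI hFinH : Finite (Λ₂ ⧸ M.addSubgroupOf Λ₂) := finite_quot hΛ₂ hN1 hNM
  -- integrality facts
  have hKint : ∀ α ∈ K, ∀ μ ∈ Λ₂, ∃ k : ℤ, B α μ / ℓ = (k : ℚ) := by
    rintro α ⟨-, hα2⟩ μ hμ
    obtain ⟨k, hk⟩ := (mem_smul_dual hℓ).mp hα2 μ hμ
    exact ⟨k, by rw [hk]; field_simp⟩
  have hMint : ∀ μ ∈ M, ∀ α ∈ ΛR, ∃ k : ℤ, B α μ / ℓ = (k : ℚ) := by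
    rintro μ ⟨-, hμ2⟩ α hα
    obtain ⟨k, hk⟩ := (mem_smul_dual hℓ).mp hμ2 α hα
    exact ⟨k, by rw [hBsymm, hk]; field_simp⟩
  -- the pairing, descended to the two quotients
  have e2add : ∀ (α μ μ' : Fin n → ℚ),
      ee (B α (μ + μ') / ℓ) = ee (B α μ / ℓ) * ee (B α μ' / ℓ) := by
    intro α μ μ'
    rw [← ee_add]
    congr 1
    rw [map_add]
    ring
  have e1add : ∀ (α α' μ : Fin n → ℚ),
      ee (B (α + α') μ / ℓ) = ee (B α μ / ℓ) * ee (B α' μ / ℓ) := by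
    intro α α' μ
    rw [← ee_add]
    congr 1
    rw [map_add, LinearMap.add_apply]
    ring
  have ee0 : ∀ α : Fin n → ℚ, Additive.ofMul (ee (B α (0 : Fin n → ℚ) / ℓ)) = 0 := by
    intro α
    rw [map_zero, zero_div, show ee 0 = 1 from ee_int 0]
    rfl
  let e2 : ΛR → (Λ₂ →+ Additive ℂ) := fun α =>
    { toFun := fun μ => Additive.ofMul (ee (B α μ / ℓ))
      map_zero' := ee0 α
      map_add' := by
        intro μ μ'
        show Additive.ofMul (ee (B α ((μ : Fin n → ℚ) + μ') / ℓ)) = _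
        rw [e2add, ofMul_mul] }
  have e2ker : ∀ α : ΛR, M.addSubgroupOf Λ₂ ≤ (e2 α).ker := by
    intro α μ hμ
    rw [AddMonoidHom.mem_ker]
    obtain ⟨k, hk⟩ := hMint μ (AddSubgroup.mem_addSubgroupOf.mp hμ) α α.2
    show Additive.ofMul (ee (B α μ / ℓ)) = 0
    rw [hk, ee_int]
    rfl
  let f2 : ΛR → ((Λ₂ ⧸ M.addSubgroupOf Λ₂) →+ Additive ℂ) := fun α =>
    QuotientAddGroup.lift _ (e2 α) (e2ker α)
  let F : ΛR →+ ((Λ₂ ⧸ M.addSubgroupOf Λ₂) →+ Additive ℂ) :=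
    { toFun := f2
      map_zero' := by
        ext μ
        show Additive.ofMul (ee (B ((0 : ΛR) : Fin n → ℚ) μ / ℓ)) = 0
        rw [AddSubgroup.coe_zero, map_zero, LinearMap.zero_apply, zero_div,
            show ee 0 = 1 from ee_int 0]
        rfl
      map_add' := by
        intro α α'
        ext μ
        show Additive.ofMul (ee (B ((α : Fin n → ℚ) + α') μ / ℓ)) =
          Additive.ofMul (ee (B α μ / ℓ)) + Additive.ofMul (ee (B α' μ / ℓ))
        rw [e1add, ofMul_mul] }
  have Fker : K.addSubgroupOf ΛR ≤ F.ker := by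
    intro α hα
    rw [AddMonoidHom.mem_ker]
    ext μ
    obtain ⟨k, hk⟩ := hKint α (AddSubgroup.mem_addSubgroupOf.mp hα) μ μ.2
    show Additive.ofMul (ee (B α μ / ℓ)) = 0
    rw [hk, ee_int]
    rfl
  let P := QuotientAddGroup.lift _ F Fker
  let p : (ΛR ⧸ K.addSubgroupOf ΛR) → (Λ₂ ⧸ M.addSubgroupOf Λ₂) → ℂ :=
    fun x y => Additive.toMul (P x y)
  have hpmk : ∀ (α : ΛR) (μ : Λ₂),
      p (QuotientAddGroup.mk α) (QuotientAddGroup.mk μ) = ee (B α μ / ℓ) := fun _ _ => rfl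
  -- the character χ descends to the quotient
  have hχ0 : χ 0 = 1 := hχM 0 (zero_mem _)
  let cχ : Λ₂ →+ Additive ℂ :=
    { toFun := fun μ => Additive.ofMul (χ μ)
      map_zero' := by
        show Additive.ofMul (χ ((0 : Λ₂) : Fin n → ℚ)) = 0
        rw [AddSubgroup.coe_zero, hχ0]
        rfl
      map_add' := by
        intro μ μ'
        show Additive.ofMul (χ ((μ : Fin n → ℚ) + μ')) = _
        rw [hχadd _ μ.2 _ μ'.2, ofMul_mul] }
  have cχker : M.addSubgroupOf Λ₂ ≤ cχ.ker := by
    intro μ hμ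
    rw [AddMonoidHom.mem_ker]
    show Additive.ofMul (χ μ) = 0
    rw [hχM μ (AddSubgroup.mem_addSubgroupOf.mp hμ)]
    rfl
  let χq : AddChar (Λ₂ ⧸ M.addSubgroupOf Λ₂) ℂ :=
    AddChar.toAddMonoidHomEquiv.symm (QuotientAddGroup.lift _ cχ cχker)
  have hχq : ∀ μ : Λ₂, χq (QuotientAddGroup.mk μ) = χ μ := fun _ => rfl
  -- apply duality
  obtain ⟨x, hx⟩ := duality p
    (by intro g g' h
        induction g using QuotientAddGroup.induction_on with
        | H α =>
        induction g' using QuotientAddGroup.induction_on with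
        | H α' =>
        induction h using QuotientAddGroup.induction_on with
        | H μ =>
          show p (QuotientAddGroup.mk (α + α')) _ = _
          rw [hpmk, hpmk, hpmk]
          exact e1add α α' μ)
    (by intro g h h'
        induction g using QuotientAddGroup.induction_on with
        | H α =>
        induction h using QuotientAddGroup.induction_on with
        | H μ =>
        induction h' using QuotientAddGroup.induction_on with
        | H μ' =>
          show p _ (QuotientAddGroup.mk (μ + μ')) = _
          rw [hpmk, hpmk, hpmk]
          exact e2add α μ μ')
    (by intro h
        induction h using QuotientAddGroup.induction_on with
        | H μ =>
          show p (QuotientAddGroup.mk 0) _ = 1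
          rw [hpmk]
          simp [ee_eq_one_iff]
          exact ⟨0, by simp⟩)
    (by intro g
        induction g using QuotientAddGroup.induction_on with
        | H α =>
          show p _ (QuotientAddGroup.mk 0) = 1
          rw [hpmk]
          simp [ee_eq_one_iff]
          exact ⟨0, by simp⟩)
    (by intro g hg
        induction g using QuotientAddGroup.induction_on with
        | H α =>
          rw [QuotientAddGroup.eq_zero_iff, AddSubgroup.mem_addSubgroupOf]
          refine ⟨α.2, (mem_smul_dual hℓ).mpr fun μ hμ => ?_⟩
          have := hg (QuotientAddGroup.mk ⟨μ, hμ⟩)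
          rw [hpmk] at this
          obtain ⟨k, hk⟩ := ee_eq_one_iff.mp this
          exact ⟨k, by field_simp at hk; linarith [hk]⟩)
    (by intro h hh
        induction h using QuotientAddGroup.induction_on with
        | H μ =>
          rw [QuotientAddGroup.eq_zero_iff, AddSubgroup.mem_addSubgroupOf]
          refine ⟨μ.2, (mem_smul_dual hℓ).mpr fun α hα => ?_⟩
          have := hh (QuotientAddGroup.mk ⟨α, hα⟩)
          rw [hpmk] at this
          obtain ⟨k, hk⟩ := ee_eq_one_iff.mp this
          refine ⟨k, ?_⟩
          rw [← hBsymm]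
          field_simp at hk
          linarith [hk])
    χq
  obtain ⟨α, rfl⟩ := QuotientAddGroup.mk_surjective x
  refine ⟨α, α.2, fun μ hμ => ?_⟩
  have := hx (QuotientAddGroup.mk ⟨μ, hμ⟩)
  rw [hpmk, hχq] at this
  exact this

end Main


/-- the composite `Cent^g ↪ Λ₁ → Λ₁/Λ_R` has kernel exactly
`Λ' = Λ_R ∩ ℓ·Λ₁^B` and image exactly the left radical of `a_g^ℓ`;
stated element-wise: `Cent^g ∩ Λ_R = Λ'`, and for `λ ∈ Λ₁` the class
`λ + Λ_R` meets `Cent^g` iff `a_g^ℓ(λ̄,μ̄) = 1` for all `μ̄`. -/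
theorem stmt5 {n : ℕ} (hn : 1 ≤ n)
    (B : (Fin n → ℚ) →ₗ[ℚ] (Fin n → ℚ) →ₗ[ℚ] ℚ)
    (hBsymm : ∀ x y, B x y = B y x)
    (hBnd : ∀ x, (∀ y, B x y = 0) → x = 0)
    (ℓ : ℕ) (hℓ : 1 ≤ ℓ)
    (ΛR Λ₁ Λ₂ : AddSubgroup (Fin n → ℚ))
    (hΛR : IsLattice ΛR) (hΛ₁ : IsLattice Λ₁) (hΛ₂ : IsLattice Λ₂)
    (hsub₁ : ΛR ≤ Λ₁) (hsub₂ : ΛR ≤ Λ₂)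
    (hΛ' : ΛR ⊓ smulLat ℓ (dualLattice B Λ₁) = ΛR ⊓ smulLat ℓ (dualLattice B Λ₂))
    (g : (Fin n → ℚ) → (Fin n → ℚ) → ℂˣ)
    (hg1 : ∀ lam lam' μ, lam ∈ Λ₁ → lam' ∈ Λ₁ → μ ∈ Λ₂ →
      g (lam + lam') μ = g lam μ * g lam' μ)
    (hg2 : ∀ lam μ μ', lam ∈ Λ₁ → μ ∈ Λ₂ → μ' ∈ Λ₂ →
      g lam (μ + μ') = g lam μ * g lam μ')
    (hginv1 : ∀ lam μ α, lam ∈ Λ₁ → μ ∈ Λ₂ → α ∈ ΛR → g (lam + α) μ = g lam μ)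
    (hginv2 : ∀ lam μ α, lam ∈ Λ₁ → μ ∈ Λ₂ → α ∈ ΛR → g lam (μ + α) = g lam μ)
    (A : (Fin n → ℚ) →+ (Fin n → ℚ))
    (hA1 : Λ₂.map A = Λ₂ ⊓ smulLat ℓ (dualLattice B ΛR))
    (hA2 : ΛR.map A = ΛR ⊓ smulLat ℓ (dualLattice B Λ₂)) :
    -- kernel of `Cent^g ↪ Λ₁ → Λ₁/Λ_R` is exactly `Λ'`:
    ((({lam | lam ∈ Λ₁ ∧ ∀ μ ∈ Λ₂, ee (B lam μ / ℓ) = (g lam μ : ℂ)} : Set (Fin n → ℚ))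
        ∩ (ΛR : Set (Fin n → ℚ)))
      = ((ΛR ⊓ smulLat ℓ (dualLattice B Λ₁) : AddSubgroup (Fin n → ℚ)) : Set (Fin n → ℚ))) ∧
    -- image in `Λ₁/Λ_R` is exactly the left radical of `a_g^ℓ`:
    (∀ lam ∈ Λ₁,
      ((∃ c, (c ∈ Λ₁ ∧ ∀ μ ∈ Λ₂, ee (B c μ / ℓ) = (g c μ : ℂ)) ∧ lam - c ∈ ΛR)
        ↔ (∀ μ ∈ Λ₂, ee (-(B lam (A μ)) / ℓ) * (g lam (A μ) : ℂ) = 1))) := by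
  have hℓ0 : (ℓ : ℚ) ≠ 0 := by positivity
  -- g is 1 when either argument is in the relevant trivial position
  have g0l : ∀ μ ∈ Λ₂, g 0 μ = 1 := by
    intro μ hμ
    have := hg1 0 0 μ (zero_mem _) (zero_mem _) hμ
    rw [add_zero] at this
    exact (left_eq_mul.mp this)
  have galpha : ∀ α ∈ ΛR, ∀ μ ∈ Λ₂, g α μ = 1 := by
    intro α hα μ hμ
    have := hginv1 0 μ α (zero_mem _) hμ hα
    rw [zero_add] at this
    rw [this]
    exact g0l μ hμ
  constructor
  · -- Part 1: kernel
    ext x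
    simp only [Set.mem_inter_iff, Set.mem_setOf_eq, SetLike.mem_coe]
    constructor
    · rintro ⟨⟨hx1, hcent⟩, hxR⟩
      rw [hΛ']
      refine AddSubgroup.mem_inf.mpr ⟨hxR, (mem_smul_dual hℓ).mpr fun μ hμ => ?_⟩
      have h1 : ee (B x μ / ℓ) = 1 := by
        rw [hcent μ hμ, galpha x hxR μ hμ, Units.val_one]
      obtain ⟨k, hk⟩ := ee_eq_one_iff.mp h1
      refine ⟨k, ?_⟩
      field_simp at hk
      linarith [hk]
    · intro hx
      have hx' := hx
      rw [hΛ'] at hx'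
      obtain ⟨hxR, hxd⟩ := AddSubgroup.mem_inf.mp hx'
      refine ⟨⟨hsub₁ hxR, fun μ hμ => ?_⟩, hxR⟩
      obtain ⟨k, hk⟩ := (mem_smul_dual hℓ).mp hxd μ hμ
      rw [galpha x hxR μ hμ, Units.val_one, ee_eq_one_iff]
      exact ⟨k, by rw [hk]; field_simp⟩
  · -- Part 2: image
    intro lam hlam
    constructor
    · rintro ⟨c, ⟨hc1, hcent⟩, hlc⟩ μ hμ
      have hAμ : A μ ∈ Λ₂ ⊓ smulLat ℓ (dualLattice B ΛR) := by
        rw [← hA1]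
        exact ⟨μ, hμ, rfl⟩
      obtain ⟨hAμ2, hAμd⟩ := AddSubgroup.mem_inf.mp hAμ
      have hglc : g lam (A μ) = g c (A μ) := by
        have := hginv1 c (A μ) (lam - c) hc1 hAμ2 hlc
        rwa [add_sub_cancel] at this
      obtain ⟨k, hk⟩ := (mem_smul_dual hℓ).mp hAμd (lam - c) hlc
      rw [hglc, ← hcent (A μ) hAμ2, ← ee_add, ee_eq_one_iff]
      refine ⟨-k, ?_⟩
      rw [map_sub] at hk
      rw [hBsymm lam (A μ), hBsymm c (A μ)]
      have hBc : (B (A μ)) lam = (B (A μ)) c + ℓ * k := by linarith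
      rw [hBc]
      push_cast
      field_simp
      ring
    · intro hrad
      set χ : (Fin n → ℚ) → ℂ := fun μ => ee (B lam μ / ℓ) * ((g lam μ)⁻¹ : ℂˣ) with hχ
      have hχadd : ∀ μ ∈ Λ₂, ∀ μ' ∈ Λ₂, χ (μ + μ') = χ μ * χ μ' := by
        intro μ hμ μ' hμ'
        rw [hχ]
        simp only
        simp only [map_add, add_div, ee_add, hg2 lam μ μ' hlam hμ hμ', mul_inv,
          Units.val_mul, Units.val_inv_eq_inv_val]
        ring
      have hχM : ∀ μ ∈ Λ₂ ⊓ smulLat ℓ (dualLattice B ΛR), χ μ = 1 := by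
        intro μ hμ
        rw [← hA1] at hμ
        obtain ⟨ν, hν, rfl⟩ := hμ
        have h1 := hrad ν hν
        have h2 : (g lam (A ν) : ℂ) = ee (B lam (A ν) / ℓ) := by
          have hne := ee_ne_zero (-(B lam (A ν)) / ℓ)
          have h4 : ee (-(B lam (A ν)) / ℓ) * ee (B lam (A ν) / ℓ) = 1 := by
            have harg : -(B lam (A ν)) / ℓ + B lam (A ν) / ℓ = ((0 : ℤ) : ℚ) := by
              push_cast
              ring
            rw [← ee_add, harg, ee_int]
          exact mul_left_cancel₀ hne (h1.trans h4.symm)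
        rw [hχ]
        simp only
        rw [Units.val_inv_eq_inv_val, h2]
        exact mul_inv_cancel₀ (ee_ne_zero _)
      obtain ⟨α, hαR, hα⟩ := exists_alpha hBsymm hℓ hΛR hΛ₂ χ hχadd hχM
      refine ⟨lam - α, ⟨AddSubgroup.sub_mem _ hlam (hsub₁ hαR), fun μ hμ => ?_⟩,
        by rwa [sub_sub_cancel]⟩
      have hgsub : g (lam - α) μ = g lam μ := by
        have := hginv1 (lam - α) μ α (AddSubgroup.sub_mem _ hlam (hsub₁ hαR)) hμ hαR
        rw [sub_add_cancel] at this
        exact this.symm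
      rw [hgsub]
      have hαμ := hα μ hμ
      rw [hχ] at hαμ
      simp only at hαμ
      rw [map_sub, LinearMap.sub_apply, sub_div, sub_eq_add_neg, ee_add, ee_neg, hαμ,
        Units.val_inv_eq_inv_val, mul_inv, inv_inv, ← mul_assoc,
        mul_inv_cancel₀ (ee_ne_zero _), one_mul]
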